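/- arXiv:1002.0688 — 2 statements merged into one kernel-verified Lean document; each statement's English description precedes it below -/
import Mathlib

section
/- The 8×8 block-diagonal matrices diag(M1(a1,a2,a3,a4), M2(a1,a2,a3,a5)), where M1 has rows (0,-a1,0,a4),(0,0,-a1,a3),(0,0,0,a2),(0,0,0,0) and M2 has rows (0,a2,0,a5),(0,0,a2,-a3),(0,0,0,-a1),(0,0,0,0), form a 5-dimensional Lie algebra under [A,B] = BA − AB whose generators l1,…,l5 (given by a_j = δ_ij) satisfy [l1,l2]=l3, [l1,l3]=l4, [l2,l3]=l5, and all other brackets of pairs of generators vanish. -/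
/-- The block M₁(a₁,a₂,a₃,a₄). -/
def CartanM₁ (a₁ a₂ a₃ a₄ : ℝ) : Matrix (Fin 4) (Fin 4) ℝ :=
  !![0, -a₁, 0, a₄;
     0, 0, -a₁, a₃;
     0, 0, 0, a₂;
     0, 0, 0, 0]

/-- The block M₂(a₁,a₂,a₃,a₅). -/
def CartanM₂ (a₁ a₂ a₃ a₅ : ℝ) : Matrix (Fin 4) (Fin 4) ℝ :=
  !![0, a₂, 0, a₅;
     0, 0, a₂, -a₃;
     0, 0, 0, -a₁;
     0, 0, 0, 0]

/-- The block-diagonal 8×8 matrix diag(M₁(a₁,a₂,a₃,a₄), M₂(a₁,a₂,a₃,a₅)). -/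
def CartanM (a₁ a₂ a₃ a₄ a₅ : ℝ) : Matrix (Fin 4 ⊕ Fin 4) (Fin 4 ⊕ Fin 4) ℝ :=
  Matrix.fromBlocks (CartanM₁ a₁ a₂ a₃ a₄) 0 0 (CartanM₂ a₁ a₂ a₃ a₅)

/-- The bracket [A,B] := BA − AB. -/
def mbracket8 (A B : Matrix (Fin 4 ⊕ Fin 4) (Fin 4 ⊕ Fin 4) ℝ) :
    Matrix (Fin 4 ⊕ Fin 4) (Fin 4 ⊕ Fin 4) ℝ := B * A - A * B


lemma mul1 (a₁ a₂ a₃ a₄ b₁ b₂ b₃ b₄ : ℝ) :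
    CartanM₁ a₁ a₂ a₃ a₄ * CartanM₁ b₁ b₂ b₃ b₄ =
      !![0,0,a₁*b₁,-(a₁*b₃); 0,0,0,-(a₁*b₂); 0,0,0,0; 0,0,0,0] := by
  ext i j
  fin_cases i <;> fin_cases j <;>
    simp [CartanM₁, Matrix.mul_apply, Fin.sum_univ_four, Matrix.vecHead, Matrix.vecTail]

lemma mul2 (a₁ a₂ a₃ a₅ b₁ b₂ b₃ b₅ : ℝ) :
    CartanM₂ a₁ a₂ a₃ a₅ * CartanM₂ b₁ b₂ b₃ b₅ =
      !![0,0,a₂*b₂,-(a₂*b₃); 0,0,0,-(a₂*b₁); 0,0,0,0; 0,0,0,0] := by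
  ext i j
  fin_cases i <;> fin_cases j <;>
    simp [CartanM₂, Matrix.mul_apply, Fin.sum_univ_four, Matrix.vecHead, Matrix.vecTail]

lemma bracket_eq (a₁ a₂ a₃ a₄ a₅ b₁ b₂ b₃ b₄ b₅ : ℝ) :
    mbracket8 (CartanM a₁ a₂ a₃ a₄ a₅) (CartanM b₁ b₂ b₃ b₄ b₅) =
      CartanM 0 0 (a₁*b₂ - b₁*a₂) (a₁*b₃ - b₁*a₃) (a₂*b₃ - b₂*a₃) := by
  unfold mbracket8 CartanM
  rw [Matrix.fromBlocks_multiply, Matrix.fromBlocks_multiply]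
  ext (i|i) (j|j) <;>
    simp [mul1, mul2, CartanM₁, CartanM₂] <;>
    fin_cases i <;> fin_cases j <;> simp [Matrix.vecHead, Matrix.vecTail] <;> ring

lemma cartan_zero : CartanM 0 0 0 0 0 = 0 := by
  unfold CartanM CartanM₁ CartanM₂
  ext (i|i) (j|j) <;> simp [Matrix.vecHead, Matrix.vecTail] <;>
    fin_cases i <;> fin_cases j <;> simp [Matrix.vecHead, Matrix.vecTail]

theorem stmt9 :
    let l₁ := CartanM 1 0 0 0 0
    let l₂ := CartanM 0 1 0 0 0
    let l₃ := CartanM 0 0 1 0 0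
    let l₄ := CartanM 0 0 0 1 0
    let l₅ := CartanM 0 0 0 0 1
    LinearIndependent ℝ ![l₁, l₂, l₃, l₄, l₅] ∧
    mbracket8 l₁ l₂ = l₃ ∧ mbracket8 l₁ l₃ = l₄ ∧ mbracket8 l₂ l₃ = l₅ ∧
    mbracket8 l₁ l₄ = 0 ∧ mbracket8 l₁ l₅ = 0 ∧ mbracket8 l₂ l₄ = 0 ∧ mbracket8 l₂ l₅ = 0 ∧
    mbracket8 l₃ l₄ = 0 ∧ mbracket8 l₃ l₅ = 0 ∧ mbracket8 l₄ l₅ = 0 := by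
  intro l₁ l₂ l₃ l₄ l₅
  refine ⟨?_, ?_, ?_, ?_, ?_, ?_, ?_, ?_, ?_, ?_, ?_⟩
  · rw [Fintype.linearIndependent_iff]
    intro g h i
    have key : ∀ x y, (∑ k : Fin 5, g k • ![l₁, l₂, l₃, l₄, l₅] k) x y = 0 := by
      intro x y; rw [h]; rfl
    have h1 := key (Sum.inl 0) (Sum.inl 1)
    have h2 := key (Sum.inl 2) (Sum.inl 3)
    have h3 := key (Sum.inl 1) (Sum.inl 3)
    have h4 := key (Sum.inl 0) (Sum.inl 3)
    have h5 := key (Sum.inr 0) (Sum.inr 3)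
    simp [Fin.sum_univ_five, l₁, l₂, l₃, l₄, l₅, CartanM, CartanM₁, CartanM₂,
      Matrix.vecHead, Matrix.vecTail] at h1 h2 h3 h4 h5
    fin_cases i <;> simp_all
  all_goals
    simp only [l₁, l₂, l₃, l₄, l₅, bracket_eq]
    norm_num [cartan_zero]
end

section
/- For each λ ≠ 0 and μ ∈ ℝ, the map X^{λ,μ} assigning to (x1,x2,x3,x4) ∈ ℝ⁴ the operator on L²(ℝ,ℂ) defined by (X^{λ,μ}(x)ψ)(θ) = exp(i(−(μ/(2λ)) x2 + λ x4 − λ x3 θ + (λ/2) x2 θ²)) ψ(θ + x1) is a group homomorphism from the Engel group (ℝ⁴ with product (x1,x2,x3,x4)·(y1,y2,y3,y4) = (x1+y1, x2+y2, x3+y3−x1 y2, x4+y4+½ x1² y2 − x1 y3)) into the unitary operators on L²(ℝ,ℂ). -/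
open MeasureTheory
open scoped ENNReal NNReal

/-- The Engel group product on ℝ⁴. -/
noncomputable def engelMul (x y : ℝ × ℝ × ℝ × ℝ) : ℝ × ℝ × ℝ × ℝ :=
  (x.1 + y.1, x.2.1 + y.2.1, x.2.2.1 + y.2.2.1 - x.1 * y.2.1,
   x.2.2.2 + y.2.2.2 + (1 / 2) * x.1 ^ 2 * y.2.1 - x.1 * y.2.2.1)

/-- The representation 𝔛^{λ,μ} of the Engel group, acting on functions ℝ → ℂ. -/
noncomputable def engelRep (l μ : ℝ) (x : ℝ × ℝ × ℝ × ℝ) (ψ : ℝ → ℂ) : ℝ → ℂ :=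
  fun θ => Complex.exp (Complex.I *
      (-(↑μ / (2 * ↑l)) * ↑x.2.1 + ↑l * ↑x.2.2.2 - ↑l * ↑x.2.2.1 * ↑θ +
        (↑l / 2) * ↑x.2.1 * ↑θ ^ 2)) * ψ (θ + x.1)

theorem stmt12 (l μ : ℝ) (hl : l ≠ 0) :
    (∀ x y : ℝ × ℝ × ℝ × ℝ, ∀ ψ : ℝ → ℂ,
      engelRep l μ (engelMul x y) ψ = engelRep l μ x (engelRep l μ y ψ)) ∧
    (∀ ψ : ℝ → ℂ, engelRep l μ (0, 0, 0, 0) ψ = ψ) ∧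
    (∀ x : ℝ × ℝ × ℝ × ℝ, ∀ ψ : ℝ → ℂ,
      eLpNorm (engelRep l μ x ψ) 2 volume = eLpNorm ψ 2 volume) := by
  refine ⟨?_, ?_, ?_⟩
  · intro x y ψ
    funext θ
    simp only [engelRep, engelMul]
    rw [mul_assoc, ← mul_assoc (Complex.exp _), ← Complex.exp_add, ← mul_add]
    have harg : ((θ : ℝ) + (x.1 + y.1)) = (θ + x.1) + y.1 := by ring
    rw [harg]
    congr 2
    push_cast
    ring
  · intro ψ
    funext θ
    simp [engelRep]
  · intro x ψ
    have hnorm : ∀ θ : ℝ, ‖engelRep l μ x ψ θ‖₊ = ‖ψ (θ + x.1)‖₊ := by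
      intro θ
      have key : ∀ z : ℂ, z.re = 0 → ‖Complex.exp z‖ = 1 := by
        intro z hz
        rw [Complex.norm_exp, hz, Real.exp_zero]
      refine NNReal.eq ?_
      simp only [engelRep, coe_nnnorm, norm_mul]
      rw [key _ (by simp [Complex.mul_re, ← Complex.ofReal_pow, ← Complex.ofReal_ofNat, ← Complex.ofReal_mul, ← Complex.ofReal_div]), one_mul]
    have h2 : (2 : ℝ≥0∞) ≠ 0 := by norm_num
    have ht : (2 : ℝ≥0∞) ≠ ⊤ := by norm_num
    rw [eLpNorm_eq_lintegral_rpow_enorm_toReal h2 ht, eLpNorm_eq_lintegral_rpow_enorm_toReal h2 ht]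
    congr 1
    simp_rw [enorm_eq_nnnorm, hnorm]
    exact lintegral_add_right_eq_self (fun θ => (‖ψ θ‖₊ : ℝ≥0∞) ^ (2 : ℝ≥0∞).toReal) x.1
end
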